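/- arXiv:1007.2913 — 2 statements merged into one kernel-verified Lean document; each statement's English description precedes it below -/
import Mathlib

section
/- Let m, n be positive integers, lM, lN positive integers with lM < lN, r = ⌊m/lM⌋, s = ⌊n/lN⌋, and suppose (m mod lM) + (n mod lN) < lN. Let (d_1, ..., d_k) be positive integers with d_1 + ... + d_k = m + n, where exactly r' of the d_i satisfy lM ≤ d_i < lN and the remaining k - r' satisfy d_i ≥ lN, and suppose the sum of those r' values is at most m. Then k ≤ r + s. -/
/-- combinatorial heart of Theorem 3.8. -/
theorem stmt7 (m n lM lN : ℕ) (hm : 0 < m) (hn : 0 < n) (hlM : 0 < lM)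
    (hlt : lM < lN) (r s : ℕ) (hr : r = m / lM) (hs : s = n / lN)
    (hmod : m % lM + n % lN < lN)
    (k r' : ℕ) (d : Fin k → ℕ) (hdpos : ∀ i, 0 < d i)
    (hsum : ∑ i, d i = m + n)
    (A : Finset (Fin k)) (hcard : A.card = r')
    (hA : ∀ i ∈ A, lM ≤ d i ∧ d i < lN) (hAc : ∀ i ∉ A, lN ≤ d i)
    (hAsum : ∑ i ∈ A, d i ≤ m) :
    k ≤ r + s := by
  have h1 : r' * lM ≤ ∑ i ∈ A, d i := by
    calc r' * lM = ∑ _i ∈ A, lM := by rw [Finset.sum_const, hcard, smul_eq_mul]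
    _ ≤ _ := Finset.sum_le_sum fun i hi => (hA i hi).1
  have hr'r : r' ≤ r := by
    rw [hr]
    exact (Nat.le_div_iff_mul_le hlM).2 (h1.trans hAsum)
  have hkr' : r' ≤ k := by
    rw [← hcard]
    simpa using A.card_le_univ
  have hcompl : (k - r') * lN ≤ ∑ i ∈ Aᶜ, d i := by
    calc (k - r') * lN = ∑ _i ∈ Aᶜ, lN := by
          rw [Finset.sum_const, Finset.card_compl, hcard, smul_eq_mul,
            Fintype.card_fin]
    _ ≤ _ := Finset.sum_le_sum fun i hi => hAc i (Finset.mem_compl.1 hi)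
  have htotal : ∑ i ∈ A, d i + ∑ i ∈ Aᶜ, d i = m + n := by
    rw [Finset.sum_add_sum_compl, hsum]
  have hkey : (k - r') * lN + r' * lM ≤ m + n := by
    calc (k - r') * lN + r' * lM ≤ ∑ i ∈ Aᶜ, d i + ∑ i ∈ A, d i :=
          Nat.add_le_add hcompl h1
    _ = m + n := by rw [Nat.add_comm, htotal]
  -- arithmetic finish
  have hmdvd : lM * r + m % lM = m := by rw [hr]; exact Nat.div_add_mod m lM
  have hndvd : lN * s + n % lN = n := by rw [hs]; exact Nat.div_add_mod n lN
  have ha : m % lM < lM := Nat.mod_lt m hlM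
  by_contra hcon
  push_neg at hcon
  set t := k - r' with ht
  have hk : k = t + r' := (Nat.sub_add_cancel hkr').symm
  rw [hk] at hcon
  have h2 : r + s + 1 ≤ t + r' := hcon
  have h3 : (r + s + 1) * lN ≤ (t + r') * lN := Nat.mul_le_mul_right lN h2
  have h4 : r' * lN ≤ r' * lM + r * (lN - lM) := by
    have : r' * (lN - lM) ≤ r * (lN - lM) := Nat.mul_le_mul_right _ hr'r
    have hexp : r' * lN = r' * lM + r' * (lN - lM) := by
      rw [← Nat.mul_add, Nat.add_sub_cancel' (Nat.le_of_lt hlt)]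
    omega
  have h5 : r * (lN - lM) + r * lM = r * lN := by
    rw [← Nat.mul_add, Nat.sub_add_cancel (Nat.le_of_lt hlt)]
  -- combine
  have : (r + s + 1) * lN ≤ t * lN + r' * lN := by
    rw [Nat.add_mul t r' lN] at h3; exact h3
  nlinarith [hkey, h4, h5, hmdvd, hndvd]
end

section
/- Let m_1 ≤ m_2 ≤ ... ≤ m_n be positive integers and let (d_1, ..., d_k) be positive integers with d_1 + ... + d_k = m_1 + ... + m_n and each d_i ∈ {m_1, ..., m_n} satisfying d_i ≥ m_1. Write the multiset {m_1, ..., m_n} with distinct values r_1 < ... < r_l occurring with multiplicities s_1, ..., s_l, and write the multiset {d_1, ..., d_k} with the value r_i occurring with multiplicity s_i'. If for each p the weighted partial sum condition r_1 s_1' + ... + r_p s_p' ≤ r_1 s_1 + ... + r_p s_p holds, then k ≤ n. -/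
open Finset

/-- Abel-summation style lemma (strengthened for induction). -/
lemma abel_aux : ∀ l : ℕ, 1 ≤ l → ∀ (R a b : ℕ → ℚ),
    (∀ p < l, 0 < R p) → (∀ p, p + 1 < l → R p ≤ R (p + 1)) →
    (∀ p < l, ∑ i ∈ Finset.range (p + 1), R i * a i ≤
      ∑ i ∈ Finset.range (p + 1), R i * b i) →
    ∑ i ∈ Finset.range l, a i +
      (∑ i ∈ Finset.range l, R i * b i - ∑ i ∈ Finset.range l, R i * a i) / R (l - 1)
      ≤ ∑ i ∈ Finset.range l, b i := by
  intro l hl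
  induction l, hl using Nat.le_induction with
  | base =>
    intro R a b hR0 _ h
    have h0 : 0 < R 0 := hR0 0 one_pos
    simp only [Finset.sum_range_one]
    have : (R 0 * b 0 - R 0 * a 0) / R 0 = b 0 - a 0 := by
      field_simp
    rw [this]; linarith
  | succ l hl ih =>
    intro R a b hR0 hRm h
    have ih' := ih R a b (fun p hp => hR0 p (hp.trans (Nat.lt_succ_self l)))
      (fun p hp => hRm p (hp.trans (Nat.lt_succ_self l)))
      (fun p hp => h p (hp.trans (Nat.lt_succ_self l)))
    have hRl : 0 < R l := hR0 l (Nat.lt_succ_self l)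
    have hRl1 : 0 < R (l - 1) := hR0 (l - 1) (lt_of_le_of_lt (Nat.pred_le l) (Nat.lt_succ_self l))
    have hle : R (l - 1) ≤ R l := by
      have := hRm (l - 1) (by omega)
      rwa [Nat.sub_add_cancel hl] at this
    set A := ∑ i ∈ Finset.range l, R i * a i with hA
    set B := ∑ i ∈ Finset.range l, R i * b i with hB
    have hBA : 0 ≤ B - A := by
      have := h (l - 1) (by omega)
      rw [Nat.sub_add_cancel hl] at this
      linarith
    have hdiv : (B - A) / R l ≤ (B - A) / R (l - 1) := by
      gcongr
    rw [Finset.sum_range_succ a, Finset.sum_range_succ b, Finset.sum_range_succ (fun i => R i * a i),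
      Finset.sum_range_succ (fun i => R i * b i)]
    simp only [Nat.add_sub_cancel]
    have hkey : (B + R l * b l - (A + R l * a l)) / R l = (B - A) / R l + (b l - a l) := by
      field_simp
      ring
    rw [hkey]
    linarith

/-- Sum over `Fin l` indices `≤ p` equals sum over `range (p+1)`. -/
lemma filter_le_sum {M : Type*} [AddCommMonoid M] {l : ℕ} (p : Fin l) (G : ℕ → M) :
    ∑ i ∈ Finset.univ.filter (fun i : Fin l => i ≤ p), G (i : ℕ) =
      ∑ i ∈ Finset.range ((p : ℕ) + 1), G i := by
  refine Finset.sum_nbij' (fun i => (i : ℕ)) (fun j => ⟨j % l, Nat.mod_lt _ p.pos⟩) ?_ ?_ ?_ ?_ ?_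
  · intro i hi
    simp only [Finset.mem_filter, Finset.mem_univ, true_and] at hi
    rw [Finset.mem_range, Nat.lt_succ_iff]
    exact hi
  · intro j hj
    simp only [Finset.mem_range, Nat.lt_succ_iff] at hj
    have hjl : j < l := lt_of_le_of_lt hj p.isLt
    rw [Finset.mem_filter]
    refine ⟨Finset.mem_univ _, ?_⟩
    rw [Fin.le_def]
    simpa [Nat.mod_eq_of_lt hjl] using hj
  · intro i hi
    simp only [Finset.mem_filter, Finset.mem_univ, true_and] at hi
    ext
    simp [Nat.mod_eq_of_lt i.isLt]
  · intro j hj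
    simp only [Finset.mem_range, Nat.lt_succ_iff] at hj
    have hjl : j < l := lt_of_le_of_lt hj p.isLt
    simp [Nat.mod_eq_of_lt hjl]
  · intro i hi
    rfl



/-- combinatorial content of Theorem 3.10. Given sphere dimensions
`m 1 ≤ … ≤ m n` (positive) with distinct values `r 1 < … < r l` of multiplicities
`s p`, and a tuple `(d 1, …, d k)` of values among the `m j` with multiplicities
`s' p` for the value `r p`, if `∑ d = ∑ m` and every weighted partial sum satisfies
`r_1 s'_1 + ⋯ + r_p s'_p ≤ r_1 s_1 + ⋯ + r_p s_p`, then `k ≤ n`. -/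
theorem stmt8 (n k l : ℕ) (m : Fin n → ℕ) (hmpos : ∀ j, 0 < m j)
    (hmono : Monotone m)
    (d : Fin k → ℕ) (hdval : ∀ i, ∃ j, d i = m j)
    (r : Fin l → ℕ) (hr : StrictMono r)
    (hrval : ∀ j, ∃ p, m j = r p) (hrsurj : ∀ p, ∃ j, m j = r p)
    (s s' : Fin l → ℕ)
    (hs : ∀ p, s p = (Finset.univ.filter (fun j => m j = r p)).card)
    (hs' : ∀ p, s' p = (Finset.univ.filter (fun i => d i = r p)).card)
    (hsum : ∑ i, d i = ∑ j, m j)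
    (hpartial : ∀ p : Fin l,
      ∑ i ∈ Finset.univ.filter (fun i => i ≤ p), r i * s' i ≤
      ∑ i ∈ Finset.univ.filter (fun i => i ≤ p), r i * s i) :
    k ≤ n := by
  -- dispose of the case l = 0
  rcases Nat.eq_zero_or_pos l with hl0 | hl
  · subst hl0
    rcases Nat.eq_zero_or_pos k with hk0 | hk
    · omega
    · obtain ⟨j, _⟩ := hdval ⟨0, hk⟩
      obtain ⟨p, _⟩ := hrval j
      exact absurd p.isLt (by omega)
  -- fiberwise counts: k = ∑ s', n = ∑ s
  have hrinj : ∀ x ∈ (Finset.univ : Finset (Fin l)), ∀ y ∈ Finset.univ, r x = r y → x = y :=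
    fun x _ y _ h => hr.injective h
  have hk : k = ∑ p, s' p := by
    have h1 : (Finset.univ : Finset (Fin k)).card =
        ∑ b ∈ Finset.image r Finset.univ, (Finset.univ.filter (fun i => d i = b)).card := by
      apply Finset.card_eq_sum_card_fiberwise
      intro i _
      obtain ⟨j, hj⟩ := hdval i
      obtain ⟨p, hp⟩ := hrval j
      exact Finset.mem_image.mpr ⟨p, Finset.mem_univ p, (hj.trans hp).symm⟩
    rw [Finset.card_univ, Fintype.card_fin] at h1
    rw [h1, Finset.sum_image hrinj]
    exact Finset.sum_congr rfl fun p _ => (hs' p).symm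
  have hn : n = ∑ p, s p := by
    have h1 : (Finset.univ : Finset (Fin n)).card =
        ∑ b ∈ Finset.image r Finset.univ, (Finset.univ.filter (fun j => m j = b)).card := by
      apply Finset.card_eq_sum_card_fiberwise
      intro j _
      obtain ⟨p, hp⟩ := hrval j
      exact Finset.mem_image.mpr ⟨p, Finset.mem_univ p, hp.symm⟩
    rw [Finset.card_univ, Fintype.card_fin] at h1
    rw [h1, Finset.sum_image hrinj]
    exact Finset.sum_congr rfl fun p _ => (hs p).symm
  -- extend everything to ℕ → ℚ
  set R : ℕ → ℚ := fun i => if h : i < l then (r ⟨i, h⟩ : ℚ) else 1 with hRdef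
  set a : ℕ → ℚ := fun i => if h : i < l then (s' ⟨i, h⟩ : ℚ) else 0 with hadef
  set b : ℕ → ℚ := fun i => if h : i < l then (s ⟨i, h⟩ : ℚ) else 0 with hbdef
  have hRi : ∀ i : Fin l, R (i : ℕ) = (r i : ℚ) := by
    intro i; simp [hRdef, i.isLt]
  have hai : ∀ i : Fin l, a (i : ℕ) = (s' i : ℚ) := by
    intro i; simp [hadef, i.isLt]
  have hbi : ∀ i : Fin l, b (i : ℕ) = (s i : ℚ) := by
    intro i; simp [hbdef, i.isLt]
  have hR0 : ∀ p < l, 0 < R p := by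
    intro p hp
    obtain ⟨j, hj⟩ := hrsurj ⟨p, hp⟩
    have : 0 < r (⟨p, hp⟩ : Fin l) := hj ▸ hmpos j
    simp only [hRdef, dif_pos hp]
    exact_mod_cast this
  have hRm : ∀ p, p + 1 < l → R p ≤ R (p + 1) := by
    intro p hp
    have hp' : p < l := by omega
    simp only [hRdef, dif_pos hp, dif_pos hp']
    have : r (⟨p, hp'⟩ : Fin l) < r ⟨p + 1, hp⟩ := hr (by simp [Fin.lt_def])
    exact_mod_cast this.le
  have hprefix : ∀ p < l, ∑ i ∈ Finset.range (p + 1), R i * a i ≤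
      ∑ i ∈ Finset.range (p + 1), R i * b i := by
    intro p hp
    have h1 := hpartial ⟨p, hp⟩
    have h2 : ((∑ i ∈ Finset.univ.filter (fun i => i ≤ (⟨p, hp⟩ : Fin l)), r i * s' i : ℕ) : ℚ) ≤
        ((∑ i ∈ Finset.univ.filter (fun i => i ≤ (⟨p, hp⟩ : Fin l)), r i * s i : ℕ) : ℚ) := by
      exact_mod_cast h1
    push_cast at h2
    have e1 : ∑ i ∈ Finset.univ.filter (fun i => i ≤ (⟨p, hp⟩ : Fin l)),
        ((r i : ℚ) * (s' i : ℚ)) = ∑ i ∈ Finset.range (p + 1), R i * a i := by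
      rw [← filter_le_sum (⟨p, hp⟩ : Fin l) (fun i => R i * a i)]
      exact Finset.sum_congr rfl fun i _ => by rw [hRi i, hai i]
    have e2 : ∑ i ∈ Finset.univ.filter (fun i => i ≤ (⟨p, hp⟩ : Fin l)),
        ((r i : ℚ) * (s i : ℚ)) = ∑ i ∈ Finset.range (p + 1), R i * b i := by
      rw [← filter_le_sum (⟨p, hp⟩ : Fin l) (fun i => R i * b i)]
      exact Finset.sum_congr rfl fun i _ => by rw [hRi i, hbi i]
    rw [← e1, ← e2]
    exact h2
  have habel := abel_aux l hl R a b hR0 hRm hprefix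
  have hBA : 0 ≤ (∑ i ∈ Finset.range l, R i * b i - ∑ i ∈ Finset.range l, R i * a i) := by
    have := hprefix (l - 1) (by omega)
    rw [Nat.sub_add_cancel hl] at this
    linarith
  have hRl1 : 0 < R (l - 1) := hR0 (l - 1) (by omega)
  have hfin : ∑ i ∈ Finset.range l, a i ≤ ∑ i ∈ Finset.range l, b i := by
    have : 0 ≤ (∑ i ∈ Finset.range l, R i * b i - ∑ i ∈ Finset.range l, R i * a i) / R (l - 1) :=
      div_nonneg hBA hRl1.le
    linarith
  -- conclude
  have hka : (k : ℚ) = ∑ i ∈ Finset.range l, a i := by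
    rw [hk, ← Fin.sum_univ_eq_sum_range a l]
    push_cast
    exact Finset.sum_congr rfl fun i _ => (hai i).symm
  have hnb : (n : ℚ) = ∑ i ∈ Finset.range l, b i := by
    rw [hn, ← Fin.sum_univ_eq_sum_range b l]
    push_cast
    exact Finset.sum_congr rfl fun i _ => (hbi i).symm
  have : (k : ℚ) ≤ (n : ℚ) := by rw [hka, hnb]; exact hfin
  exact_mod_cast this
end
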